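/- Let n ≥ 1 and r ≥ 1, and let x_1, …, x_r be trace-zero n×n complex matrices. The following are equivalent: (i) there exists an invertible matrix g ∈ GL_n(ℂ) such that g·x_i·g⁻¹ is strictly upper triangular for every i = 1, …, r; (ii) for every function f : {1,…,n} → {1,…,r}, the product x_{f(1)}·x_{f(2)}·⋯·x_{f(n)} is the zero matrix. -/

import Mathlib

open Matrix

-- product of strictly upper triangular matrices: entry vanishing
lemma strict_prod_entry {n : ℕ} :
    ∀ (l : List (Matrix (Fin n) (Fin n) ℂ)),
      (∀ A ∈ l, ∀ j k : Fin n, k ≤ j → A j k = 0) →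
      ∀ j k : Fin n, (k : ℕ) < (j : ℕ) + l.length → l.prod j k = 0 := by
  intro l
  induction l with
  | nil =>
    intro _ j k hk
    have : j ≠ k := by
      intro h; subst h; simp at hk
    simp [Matrix.one_apply, this]
  | cons A l ih =>
    intro h j k hk
    rw [List.prod_cons, Matrix.mul_apply]
    apply Finset.sum_eq_zero
    intro t _
    by_cases ht : t ≤ j
    · rw [h A List.mem_cons_self j t ht, zero_mul]
    · push_neg at ht
      rw [ih (fun B hB => h B (List.mem_cons_of_mem A hB)) t k (by
        have : (j : ℕ) < t := ht
        simp only [List.length_cons] at hk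
        omega), mul_zero]

variable {n r : ℕ}

/-- The chain of subspaces `V ⊇ ∑ φᵢ V ⊇ ∑ φᵢφⱼ V ⊇ …`. -/
noncomputable def chainS (φ : Fin r → Module.End ℂ (Fin n → ℂ)) : ℕ → Submodule ℂ (Fin n → ℂ)
  | 0 => ⊤
  | k + 1 => ⨆ i, (chainS φ k).map (φ i)

lemma chainS_succ_le (φ : Fin r → Module.End ℂ (Fin n → ℂ)) (k : ℕ) :
    chainS φ (k + 1) ≤ chainS φ k := by
  induction k with
  | zero => exact le_top
  | succ k ih =>
    simp only [chainS]
    exact iSup_mono fun i => Submodule.map_mono ih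

lemma map_chainS_le (φ : Fin r → Module.End ℂ (Fin n → ℂ)) (k : ℕ) (i : Fin r) :
    (chainS φ k).map (φ i) ≤ chainS φ (k + 1) :=
  le_iSup (fun i => (chainS φ k).map (φ i)) i

lemma chainS_n_eq_bot (φ : Fin r → Module.End ℂ (Fin n → ℂ))
    (H : ∀ f : Fin n → Fin r, (List.ofFn fun j : Fin n => φ (f j)).prod = 0) :
    chainS φ n = ⊥ := by
  have key : ∀ d m : ℕ, m + d = n → ∀ f : Fin m → Fin r,
      (chainS φ d).map (List.ofFn fun j => φ (f j)).prod = ⊥ := by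
    intro d
    induction d with
    | zero =>
      intro m hm f
      have hmn : m = n := by omega
      subst hmn
      simp only [chainS]
      rw [Submodule.map_top, H f, LinearMap.range_zero]
    | succ d ih =>
      intro m hm f
      simp only [chainS]
      rw [Submodule.map_iSup]
      refine iSup_eq_bot.mpr fun i => ?_
      rw [← Submodule.map_comp, ← Module.End.mul_eq_comp]
      have hsnoc : (List.ofFn fun j : Fin (m+1) => φ ((Fin.snoc f i : Fin (m+1) → Fin r) j)).prod
          = (List.ofFn fun j => φ (f j)).prod * φ i := by
        rw [List.ofFn_succ']
        simp [Fin.snoc_castSucc]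
      rw [← hsnoc]
      exact ih (m + 1) (by omega) (Fin.snoc f i)
  have := key n 0 (by omega) Fin.elim0
  simpa [Submodule.map_id, Module.End.one_eq_id] using this


/-- Extend a linearly independent family spanning `S` to one spanning `T ⊇ S`,
keeping the old vectors first. -/
lemma extend_indep_family {M : Type*} [AddCommGroup M] [Module ℂ M] [FiniteDimensional ℂ M]
    (S T : Submodule ℂ M) (hST : S ≤ T) (m : ℕ) (v : Fin m → M)
    (hind : LinearIndependent ℂ v) (hspan : Submodule.span ℂ (Set.range v) = S) :
    ∃ (p : ℕ) (w : Fin (m + p) → M), LinearIndependent ℂ w ∧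
      Submodule.span ℂ (Set.range w) = T ∧
      (∀ a : Fin m, w (Fin.castAdd p a) = v a) ∧
      (∀ a : Fin p, w (Fin.natAdd m a) ∈ T) := by
  set p : Submodule ℂ T := S.comap T.subtype with hp_def
  obtain ⟨q, hq⟩ := p.exists_isCompl
  haveI : FiniteDimensional ℂ q := inferInstance
  set pnum := Module.finrank ℂ q with hpnum
  let u : Module.Basis (Fin pnum) ℂ q := Module.finBasis ℂ q
  set C := q.map T.subtype with hC_def
  let u' : Fin pnum → M := fun t => ((u t : q) : M)
  have hinj : Function.Injective (T.subtype ∘ₗ q.subtype) :=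
    T.injective_subtype.comp q.injective_subtype
  have hu'ind : LinearIndependent ℂ u' :=
    u.linearIndependent.map' (T.subtype ∘ₗ q.subtype)
      (LinearMap.ker_eq_bot_of_injective hinj)
  have hu'span : Submodule.span ℂ (Set.range u') = C := by
    have h0 : Set.range u' = (T.subtype ∘ₗ q.subtype) '' Set.range u := by
      rw [← Set.range_comp]; rfl
    rw [h0, Submodule.span_image, u.span_eq, Submodule.map_comp,
      Submodule.map_top, Submodule.range_subtype]
  have hmapS : Submodule.map T.subtype p = S := by
    rw [hp_def, Submodule.map_comap_subtype, inf_eq_right.mpr hST]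
  have hsup : S ⊔ C = T := by
    rw [← hmapS, hC_def, ← Submodule.map_sup, hq.sup_eq_top, Submodule.map_top,
      Submodule.range_subtype]
  have hdisj : Disjoint S C := by
    rw [← hmapS, hC_def, Submodule.disjoint_def]
    intro z hzp hzq
    obtain ⟨a, ha, rfl⟩ := hzp
    obtain ⟨b, hb, hab⟩ := hzq
    have hab' : a = b := Subtype.ext (by simpa using hab.symm)
    subst hab'
    have hmem : a ∈ p ⊓ q := ⟨ha, hb⟩
    rw [hq.inf_eq_bot] at hmem
    simpa using hmem
  set w : Fin (m + pnum) → M := Sum.elim v u' ∘ ⇑finSumFinEquiv.symm with hw_def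
  have hwl : ∀ a : Fin m, w (Fin.castAdd pnum a) = v a := by
    intro a
    simp [hw_def, ← finSumFinEquiv_apply_left]
  have hwr : ∀ a : Fin pnum, w (Fin.natAdd m a) = u' a := by
    intro a
    simp [hw_def, ← finSumFinEquiv_apply_right]
  have hwind : LinearIndependent ℂ w := by
    refine (hind.sum_type hu'ind ?_).comp _ finSumFinEquiv.symm.injective
    rw [hspan, hu'span]
    exact hdisj
  have hwspan : Submodule.span ℂ (Set.range w) = T := by
    rw [hw_def, Set.range_comp, Equiv.range_eq_univ, Set.image_univ,
      Set.Sum.elim_range, Submodule.span_union, hspan, hu'span, hsup]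
  refine ⟨pnum, w, hwind, hwspan, hwl, fun a => ?_⟩
  rw [hwr a]
  exact (le_sup_right.trans hsup.le : C ≤ T) ⟨u a, Submodule.coe_mem _, rfl⟩

variable {n r : ℕ} in
lemma exists_adapted_basis (φ : Fin r → Module.End ℂ (Fin n → ℂ))
    (H : ∀ f : Fin n → Fin r, (List.ofFn fun j : Fin n => φ (f j)).prod = 0) :
    ∃ b : Module.Basis (Fin n) ℂ (Fin n → ℂ),
      ∀ (i : Fin r) (j : Fin n), φ i (b j) ∈ Submodule.span ℂ (⇑b '' Set.Iio j) := by
  have key : ∀ k : ℕ, ∃ (m : ℕ) (v : Fin m → (Fin n → ℂ)), LinearIndependent ℂ v ∧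
      Submodule.span ℂ (Set.range v) = chainS φ (n - k) ∧
      ∀ (i : Fin r) (j : Fin m), φ i (v j) ∈ Submodule.span ℂ (v '' Set.Iio j) := by
    intro k
    induction k with
    | zero =>
      refine ⟨0, Fin.elim0, linearIndependent_empty_type, ?_, fun i j => j.elim0⟩
      rw [Nat.sub_zero, chainS_n_eq_bot φ H]
      simp
    | succ k ih =>
      by_cases hk : n ≤ k
      · have h1 : n - (k + 1) = n - k := by omega
        rw [h1]; exact ih
      · obtain ⟨m, v, hind, hspan, hord⟩ := ih
        have hd : n - k = (n - (k + 1)) + 1 := by omega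
        rw [hd] at hspan
        obtain ⟨p, w, hwind, hwspan, hwl, hwr⟩ :=
          extend_indep_family (chainS φ ((n - (k + 1)) + 1)) (chainS φ (n - (k + 1)))
            (chainS_succ_le φ _) m v hind hspan
        refine ⟨m + p, w, hwind, hwspan, ?_⟩
        intro i j
        induction j using Fin.addCases with
        | left a =>
          rw [hwl a]
          refine Submodule.span_mono ?_ (hord i a)
          rintro z ⟨b, hb, rfl⟩
          exact ⟨Fin.castAdd p b, by simpa only [Set.mem_Iio, Fin.lt_def, Fin.coe_castAdd] using hb, hwl b⟩
        | right a =>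
          have h2 : φ i (w (Fin.natAdd m a)) ∈ chainS φ ((n - (k + 1)) + 1) :=
            map_chainS_le φ _ i ⟨_, hwr a, rfl⟩
          rw [← hspan] at h2
          refine Submodule.span_mono ?_ h2
          rintro z ⟨b, rfl⟩
          refine ⟨Fin.castAdd p b, ?_, hwl b⟩
          have := b.isLt
          simp only [Set.mem_Iio, Fin.lt_def, Fin.coe_castAdd, Fin.coe_natAdd]
          omega
  obtain ⟨m, v, hind, hspan, hord⟩ := key n
  rw [Nat.sub_self] at hspan
  have hm : m = n := by
    have h1 : Module.finrank ℂ (Fin n → ℂ) = n := Module.finrank_fin_fun ℂ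
    have h2 := finrank_span_eq_card hind
    rw [hspan] at h2
    have h0 : Module.finrank ℂ (chainS φ 0) = Module.finrank ℂ (Fin n → ℂ) := finrank_top ..
    rw [h0] at h2
    simpa [h1] using h2.symm
  subst hm
  refine ⟨Module.Basis.mk hind ?_, ?_⟩
  · rw [hspan]; simp only [chainS]; exact le_rfl
  · intro i j
    simpa [Module.Basis.coe_mk] using hord i j


/-- Conjugation by a unit, as a monoid hom. -/
noncomputable def conjHom {n : ℕ} (g : GL (Fin n) ℂ) :
    Matrix (Fin n) (Fin n) ℂ →* Matrix (Fin n) (Fin n) ℂ where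
  toFun A := (g : Matrix (Fin n) (Fin n) ℂ) * A * ((g⁻¹ : GL (Fin n) ℂ) : Matrix (Fin n) (Fin n) ℂ)
  map_one' := by show _ * 1 * _ = 1; rw [mul_one]; exact g.mul_inv
  map_mul' A B := by
    simp only [Units.inv_mul_cancel_left, mul_assoc, Units.inv_mul_cancel_left]

theorem nullcone_iff_products_vanish (n r : ℕ) (hn : 1 ≤ n) (hr : 1 ≤ r)
    (x : Fin r → Matrix (Fin n) (Fin n) ℂ) (hx : ∀ i, (x i).trace = 0) :
    (∃ g : GL (Fin n) ℂ, ∀ i : Fin r, ∀ j k : Fin n, k ≤ j →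
        ((g : Matrix (Fin n) (Fin n) ℂ) * x i *
          ((g⁻¹ : GL (Fin n) ℂ) : Matrix (Fin n) (Fin n) ℂ)) j k = 0) ↔
      (∀ f : Fin n → Fin r, (List.ofFn fun j : Fin n => x (f j)).prod = 0) := by
  constructor
  · rintro ⟨g, hg⟩ f
    set y : Fin r → Matrix (Fin n) (Fin n) ℂ :=
      fun i => (g : Matrix (Fin n) (Fin n) ℂ) * x i *
        ((g⁻¹ : GL (Fin n) ℂ) : Matrix (Fin n) (Fin n) ℂ) with hy
    have hconj : conjHom g (List.ofFn fun j : Fin n => x (f j)).prod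
        = (List.ofFn fun j : Fin n => y (f j)).prod := by
      rw [map_list_prod, List.map_ofFn]
      rfl
    have hy0 : (List.ofFn fun j : Fin n => y (f j)).prod = 0 := by
      ext j k
      rw [Matrix.zero_apply]
      refine strict_prod_entry _ ?_ j k ?_
      · intro A hA j' k' hk'
        rw [List.mem_ofFn] at hA
        obtain ⟨j'', rfl⟩ := hA
        exact hg (f j'') j' k' hk'
      · rw [List.length_ofFn]
        have := k.isLt
        omega
    have h0 : conjHom g (List.ofFn fun j : Fin n => x (f j)).prod = 0 := by rw [hconj, hy0]
    have h1 : (List.ofFn fun j : Fin n => x (f j)).prod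
        = ((g⁻¹ : GL (Fin n) ℂ) : Matrix (Fin n) (Fin n) ℂ) *
          conjHom g (List.ofFn fun j : Fin n => x (f j)).prod *
          (g : Matrix (Fin n) (Fin n) ℂ) := by
      show _ = ((g⁻¹ : GL (Fin n) ℂ) : Matrix (Fin n) (Fin n) ℂ) * (_ * _ * _) * _
      simp only [mul_assoc, Units.inv_mul_cancel_left]
      rw [Units.inv_mul, mul_one]
    rw [h1, h0, mul_zero, zero_mul]
  · intro hp
    have H : ∀ f : Fin n → Fin r,
        (List.ofFn fun j : Fin n => Matrix.toLinAlgEquiv' (x (f j))).prod = 0 := by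
      intro f
      have h2 : (List.ofFn fun j : Fin n => Matrix.toLinAlgEquiv' (x (f j)))
          = (List.ofFn fun j : Fin n => x (f j)).map Matrix.toLinAlgEquiv' := by
        rw [List.map_ofFn]; rfl
      rw [h2, ← map_list_prod, hp f, map_zero]
    obtain ⟨b, hb⟩ := exists_adapted_basis (fun i => Matrix.toLinAlgEquiv' (x i)) H
    set e := Pi.basisFun ℂ (Fin n) with he
    refine ⟨⟨b.toMatrix e, e.toMatrix b, Module.Basis.toMatrix_mul_toMatrix_flip b e,
      Module.Basis.toMatrix_mul_toMatrix_flip e b⟩, ?_⟩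
    intro i j k hk
    show (b.toMatrix e * x i * e.toMatrix b) j k = 0
    have hx' : LinearMap.toMatrix e e (Matrix.toLinAlgEquiv' (x i)) = x i := by
      rw [he, LinearMap.toMatrix_eq_toMatrix']
      exact LinearMap.toMatrixAlgEquiv'_toLinAlgEquiv' (x i)
    have hmat : b.toMatrix e * x i * e.toMatrix b
        = LinearMap.toMatrix b b (Matrix.toLinAlgEquiv' (x i)) := by
      have h5 := basis_toMatrix_mul_linearMap_toMatrix_mul_basis_toMatrix b e b e
        (Matrix.toLinAlgEquiv' (x i))
      rw [hx'] at h5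
      exact h5
    rw [hmat, LinearMap.toMatrix_apply]
    have h3 := hb i k
    rw [Module.Basis.mem_span_image] at h3
    have h4 : j ∉ ((b.repr ((Matrix.toLinAlgEquiv' (x i)) (b k))).support : Set (Fin n)) := by
      intro hj
      have := h3 hj
      rw [Set.mem_Iio] at this
      exact absurd this (not_lt.mpr hk)
    simpa using Finsupp.notMem_support_iff.mp (by simpa using h4)
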